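/- The matrix exponential of t·(cos u)·(m₁+m₂)/√2 + t·(sin u)·(m₄+m₅)/√2 equals the matrix F₂(t,u) with entries: F₁₁ = cos²(t/2), F₁₂ = -e^{-iu} sin(t)/√2, F₁₃ = e^{-2iu} sin²(t/2), F₂₁ = e^{iu} sin(t)/√2, F₂₂ = cos t, F₂₃ = -e^{-iu} sin(t)/√2, F₃₁ = e^{2iu} sin²(t/2), F₃₂ = e^{iu} sin(t)/√2, F₃₃ = cos²(t/2). -/

import Mathlib

open Matrix Complex

noncomputable section

def m1 : Matrix (Fin 3) (Fin 3) ℂ := !![0, -1, 0; 1, 0, 0; 0, 0, 0]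
def m2 : Matrix (Fin 3) (Fin 3) ℂ := !![0, 0, 0; 0, 0, -1; 0, 1, 0]
def m4 : Matrix (Fin 3) (Fin 3) ℂ := !![0, I, 0; I, 0, 0; 0, 0, 0]
def m5 : Matrix (Fin 3) (Fin 3) ℂ := !![0, 0, 0; 0, 0, I; 0, I, 0]

set_option maxHeartbeats 1000000 in
/-- exp(t(cos u (m₁+m₂)/√2 + sin u (m₄+m₅)/√2)) equals the explicit matrix
F₂(t,u). -/
theorem exp_F2 (t u : ℝ) :
    NormedSpace.exp
        ((t : ℂ) • ((Real.cos u / Real.sqrt 2 : ℂ) • (m1 + m2) +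
          (Real.sin u / Real.sqrt 2 : ℂ) • (m4 + m5))) =
      !![(Real.cos (t / 2) : ℂ) ^ 2,
           -Complex.exp (-I * u) * Real.sin t / Real.sqrt 2,
           Complex.exp (-2 * I * u) * (Real.sin (t / 2) : ℂ) ^ 2;
         Complex.exp (I * u) * Real.sin t / Real.sqrt 2,
           (Real.cos t : ℂ),
           -Complex.exp (-I * u) * Real.sin t / Real.sqrt 2;
         Complex.exp (2 * I * u) * (Real.sin (t / 2) : ℂ) ^ 2,
           Complex.exp (I * u) * Real.sin t / Real.sqrt 2,
           (Real.cos (t / 2) : ℂ) ^ 2] := by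
  have hI : (I : ℂ) ^ 2 = -1 := Complex.I_sq
  set r : ℂ := (Real.sqrt 2 : ℂ) with hrdef
  have hr2 : r * r = 2 := by
    rw [hrdef, ← Complex.ofReal_mul, Real.mul_self_sqrt (by norm_num : (0:ℝ) ≤ 2)]
    norm_num
  have hr0 : r ≠ 0 := by
    intro h; rw [h, mul_zero] at hr2; exact two_ne_zero hr2.symm
  set E : ℂ := Complex.exp ((u : ℂ) * I) with hEdef
  set E' : ℂ := Complex.exp (-((u : ℂ) * I)) with hE'def
  have hEE' : E * E' = 1 := by
    rw [hEdef, hE'def, ← Complex.exp_add, add_neg_cancel, Complex.exp_zero]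
  set w : ℂ := Complex.exp ((t : ℂ) / 2 * I) with hwdef
  set w' : ℂ := Complex.exp (-((t : ℂ) / 2 * I)) with hw'def
  have hww' : w * w' = 1 := by
    rw [hwdef, hw'def, ← Complex.exp_add, add_neg_cancel, Complex.exp_zero]
  have hx : Complex.exp ((t : ℂ) * I) = w * w := by
    rw [hwdef, ← Complex.exp_add]; congr 1; ring
  have hy : Complex.exp (-((t : ℂ) * I)) = w' * w' := by
    rw [hw'def, ← Complex.exp_add]; congr 1; ring
  -- rewrite RHS exponentials
  have e1 : Complex.exp (I * (u : ℂ)) = E := by rw [hEdef]; congr 1; ring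
  have e2 : Complex.exp (-I * (u : ℂ)) = E' := by rw [hE'def]; congr 1; ring
  have e3 : Complex.exp (2 * I * (u : ℂ)) = E * E := by
    rw [hEdef, ← Complex.exp_add]; congr 1; ring
  have e4 : Complex.exp (-2 * I * (u : ℂ)) = E' * E' := by
    rw [hE'def, ← Complex.exp_add]; congr 1; ring
  have e2' : Complex.exp (-(I * (u : ℂ))) = E' := by rw [hE'def]; congr 1; ring
  have e4' : Complex.exp (-(2 * I * (u : ℂ))) = E' * E' := by
    rw [hE'def, ← Complex.exp_add]; congr 1; ring
  -- trig facts
  have hcos : ∀ z : ℂ, Complex.cos z = (Complex.exp (z * I) + Complex.exp (-(z * I))) / 2 := by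
    intro z; rw [Complex.cos, neg_mul]
  have hsin : ∀ z : ℂ, Complex.sin z = (Complex.exp (-(z * I)) - Complex.exp (z * I)) * I / 2 := by
    intro z; rw [Complex.sin, neg_mul]
  have hcu : (Real.cos u : ℂ) = (E + E') / 2 := by
    rw [Complex.ofReal_cos, hcos]
  have hsu : (Real.sin u : ℂ) = (E' - E) * I / 2 := by
    rw [Complex.ofReal_sin, hsin]
  have hct : (Real.cos t : ℂ) = (w * w + w' * w') / 2 := by
    rw [Complex.ofReal_cos, hcos, hx, hy]
  have hst : (Real.sin t : ℂ) = (w' * w' - w * w) * I / 2 := by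
    rw [Complex.ofReal_sin, hsin, hx, hy]
  have harg : ((t / 2 : ℝ) : ℂ) * I = (t : ℂ) / 2 * I := by push_cast; ring
  have hch : (Real.cos (t / 2) : ℂ) = (w + w') / 2 := by
    rw [Complex.ofReal_cos, hcos, harg, ← hwdef, ← hw'def]
  have hsh : (Real.sin (t / 2) : ℂ) = (w' - w) * I / 2 := by
    rw [Complex.ofReal_sin, hsin, harg, ← hwdef, ← hw'def]
  -- conjugating matrices
  set U : Matrix (Fin 3) (Fin 3) ℂ :=
    !![1, 1, 1; -(I * r * E), I * r * E, 0; -(E * E), -(E * E), E * E] with hU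
  set W : Matrix (Fin 3) (Fin 3) ℂ :=
    !![1/4, I * E' / (2 * r), -(E' * E') / 4;
       1/4, -(I * E' / (2 * r)), -(E' * E') / 4;
       1/2, 0, E' * E' / 2] with hW
  set D : Matrix (Fin 3) (Fin 3) ℂ := Matrix.diagonal ![I * t, -(I * t), 0] with hD
  have hDmat : D = !![I * t, 0, 0; 0, -(I * t), 0; 0, 0, 0] := by
    ext i j
    fin_cases i <;> fin_cases j <;> simp [hD, Matrix.diagonal, Matrix.vecHead, Matrix.vecTail]
  have hUW : U * W = 1 := by
    ext i j
    fin_cases i <;> fin_cases j <;>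
      simp [hU, hW, Matrix.mul_apply, Fin.sum_univ_three, Matrix.vecHead, Matrix.vecTail] <;>
      field_simp <;>
      first
        | rfl
        | linear_combination 0
        | linear_combination (-4*r*r*E*E') * hI + (4*r*r) * hEE'
        | linear_combination (8*E*E'+8) * hEE'
        | grind
  have hWU : W * U = 1 := by
    ext i j
    fin_cases i <;> fin_cases j <;>
      simp [hU, hW, Matrix.mul_apply, Fin.sum_univ_three, Matrix.vecHead, Matrix.vecTail] <;>
      field_simp <;>
      first
        | rfl
        | (simp [Matrix.vecHead, Matrix.vecTail]; done)
        | linear_combination 0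
        | linear_combination (-16*E*E'*r) * hI + (8*E*E'*r + 24*r) * hEE'
        | linear_combination (16*E*E'*r) * hI + (8*E*E'*r + -8*r) * hEE'
        | linear_combination (-1*E*E' + -1) * hEE'
        | linear_combination (E*E' + 1) * hEE'
        | (simp [Matrix.vecHead, Matrix.vecTail]; grind)
  set Uu : (Matrix (Fin 3) (Fin 3) ℂ)ˣ := ⟨U, W, hUW, hWU⟩ with hUu
  have hA : (t : ℂ) • ((Real.cos u / Real.sqrt 2 : ℂ) • (m1 + m2) +
      (Real.sin u / Real.sqrt 2 : ℂ) • (m4 + m5)) = U * D * W := by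
    ext i j
    fin_cases i <;> fin_cases j <;>
      rw [hDmat] <;>
      simp [hU, hW, m1, m2, m4, m5, Matrix.mul_apply, Fin.sum_univ_three,
        hcu, hsu, ← hrdef] <;>
      field_simp <;>
      first
        | linear_combination 0
        | linear_combination (-1*E'*(t:ℂ) + -1*E*(t:ℂ)) * hI
        | linear_combination (-16*E*(t:ℂ) + 16*E*r^2*(t:ℂ) + 16*E'*(t:ℂ)) * hI + (-16*E*(t:ℂ)) * hr2
        | linear_combination (4*E'*(t:ℂ) + -4*E*E'^2*r^2*(t:ℂ) + -4*E*(t:ℂ)) * hI + (4*E'*r^2*(t:ℂ)) * hEE' + (4*E'*(t:ℂ)) * hr2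
        | linear_combination (-4*E*r^2*(t:ℂ) + 8*E^2*E'*r^2*(t:ℂ) + 4*E'*r^2*(t:ℂ)) * hI + (-8*E*r^2*(t:ℂ)) * hEE'
        | grind
  have hx2 : Complex.exp (I * (t : ℂ)) = w * w := by rw [← hx]; congr 1; ring
  have hy2 : Complex.exp (-(I * (t : ℂ))) = w' * w' := by rw [← hy]; congr 1; ring
  have hexpD : NormedSpace.exp D = !![w * w, 0, 0; 0, w' * w', 0; 0, 0, 1] := by
    rw [hD, Matrix.exp_diagonal]
    ext i j
    fin_cases i <;> fin_cases j <;>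
      simp [Matrix.diagonal, Matrix.vecHead, Matrix.vecTail, ← Complex.exp_eq_exp_ℂ, hx2, hy2, Complex.exp_zero]
  rw [hA]
  have hconj := Matrix.exp_units_conj Uu D
  simp only [hUu, Units.inv_mk] at hconj
  rw [hconj, hexpD]
  ext i j
  fin_cases i <;> fin_cases j <;>
    simp [hU, hW, Matrix.mul_apply, Fin.sum_univ_three,
      e1, e2, e2', e3, e4, e4', hct, hst, hch, hsh, ← hrdef] <;>
    field_simp <;>
    first
      | linear_combination 0
      | linear_combination (-16) * hww'
      | linear_combination (64*E'^2*w*w' + -32*E'^2*w^2 + -32*E'^2*w'^2) * hI + (-64*E'^2) * hww'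
      | linear_combination (-8*I*E*w^2 + 8*I*E*w'^2) * hr2
      | linear_combination (-4*E*E'*w^2*r^2 + -4*E*E'*w'^2*r^2) * hI + (4*w^2*r^2 + 4*w'^2*r^2) * hEE'
      | linear_combination (2*I*E'*w^2*r^2 + -2*I*E'*w'^2*r^2) * hEE' + (2*I*E'*w^2 + -2*I*E'*w'^2) * hr2
      | linear_combination (64*E^2*w*w' + -32*E^2*w^2 + -32*E^2*w'^2) * hI + (-64*E^2) * hww'
      | linear_combination (-4*I*E*w^2*r^2 + 4*I*E*w'^2*r^2) * hEE'
      | linear_combination (8*E*E'*w^2 + 16*E*E' + 8*E*E'*w'^2 + 8*w^2 + 16 + 8*w'^2) * hEE' + (-16) * hww'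
      | grind


end
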